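/- Let 0 < A, D < 1 and 0 < p < 1, and define r_m = D^m · A^{(m−1) + ∑_{j=1}^{m−1}(m−j) j^{−1+p}} for m ≥ 1 (with the empty sum equal to 0 for m = 1). Then there exists a constant L > 0, independent of p, such that log(1/r_m) ≤ m log(1/D) + log(1/A) · L m^{1+p} / (p(p+1)) for all m ≥ 1. -/

import Mathlib

open Real Finset

lemma key_step (p : ℝ) (hp0 : 0 < p) (hp1 : p ≤ 1) (a : ℝ) (ha : 0 ≤ a) :
    p * (a + 1) ^ (p - 1) ≤ (a + 1) ^ p - a ^ p := by
  have h1 : (0:ℝ) < a + 1 := by linarith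
  have hs : (-1:ℝ) ≤ -(1/(a+1)) := by
    rw [neg_le_neg_iff]
    exact div_le_one_of_le₀ (by linarith) h1.le
  have hb := rpow_one_add_le_one_add_mul_self hs hp0.le hp1
  have he : 1 + -(1/(a+1)) = a / (a+1) := by field_simp; ring
  rw [he] at hb
  have hpos : (0:ℝ) < (a+1) ^ p := Real.rpow_pos_of_pos h1 _
  have hmul := mul_le_mul_of_nonneg_right hb hpos.le
  have hpow : ((a/(a+1)) ^ p) * (a+1) ^ p = a ^ p := by
    rw [← Real.mul_rpow (by positivity) h1.le, div_mul_cancel₀ _ (ne_of_gt h1)]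
  rw [hpow] at hmul
  have hsub : (a+1) ^ (p-1) = (a+1) ^ p / (a+1) := Real.rpow_sub_one (ne_of_gt h1) p
  have hexp : (1 + p * -(1/(a+1))) * (a+1) ^ p
      = (a+1) ^ p - p * ((a+1) ^ p / (a+1)) := by
    field_simp
    ring
  rw [hexp] at hmul
  rw [hsub]
  linarith

theorem stmt_6 (A D : ℝ) (hA : 0 < A) (hA1 : A < 1) (hD : 0 < D) (hD1 : D < 1) :
    ∃ L > (0:ℝ), ∀ p : ℝ, 0 < p → p < 1 → ∀ m : ℕ, 1 ≤ m →
      Real.log (1 / (D ^ m *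
          A ^ (((m:ℝ) - 1) + ∑ j ∈ Finset.Icc 1 (m - 1), ((m:ℝ) - (j:ℝ)) * (j:ℝ) ^ (-1 + p))))
        ≤ (m:ℝ) * Real.log (1 / D) +
          Real.log (1 / A) * (L * (m:ℝ) ^ (1 + p) / (p * (p + 1))) := by
  refine ⟨4, by norm_num, ?_⟩
  intro p hp0 hp1 m hm
  set S : ℝ := ∑ j ∈ Finset.Icc 1 (m - 1), ((m:ℝ) - (j:ℝ)) * (j:ℝ) ^ (-1 + p) with hS
  set x : ℝ := ((m:ℝ) - 1) + S with hx
  have hm1 : (1:ℝ) ≤ (m:ℝ) := by exact_mod_cast hm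
  have hmpos : (0:ℝ) < m := by linarith
  have hDm : (0:ℝ) < D ^ m := pow_pos hD m
  have hAx : (0:ℝ) < A ^ x := Real.rpow_pos_of_pos hA x
  -- rewrite the logarithm
  have hlog : Real.log (1 / (D ^ m * A ^ x))
      = (m:ℝ) * Real.log (1 / D) + x * Real.log (1 / A) := by
    rw [one_div, Real.log_inv, Real.log_mul (ne_of_gt hDm) (ne_of_gt hAx),
      Real.log_pow, Real.log_rpow hA, one_div, one_div, Real.log_inv, Real.log_inv]
    ring
  rw [hlog]
  have hlogA : 0 < Real.log (1 / A) := by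
    rw [one_div, Real.log_inv]
    have := Real.log_neg hA hA1
    linarith
  have hsuff : x ≤ 4 * (m:ℝ) ^ (1 + p) / (p * (p + 1)) := by
    -- bound the sum S
    have hSle : S ≤ (m:ℝ) * ((m:ℝ) ^ p / p) := by
      have hrw : S = ∑ i ∈ Finset.range (m - 1),
          ((m:ℝ) - ((1 + i : ℕ):ℝ)) * (((1 + i : ℕ):ℝ)) ^ (-1 + p) := by
        rw [hS, ← Finset.Ico_add_one_right_eq_Icc, show m - 1 + 1 = m from Nat.succ_pred_eq_of_pos hm,
          Finset.sum_Ico_eq_sum_range]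
      rw [hrw]
      have hterm : ∀ i ∈ Finset.range (m - 1),
          ((m:ℝ) - ((1 + i : ℕ):ℝ)) * (((1 + i : ℕ):ℝ)) ^ (-1 + p)
            ≤ (m:ℝ) * ((((i:ℝ) + 1) ^ p - (i:ℝ) ^ p) / p) := by
        intro i _
        have hc : ((1 + i : ℕ):ℝ) = (i:ℝ) + 1 := by push_cast; ring
        rw [hc]
        have hb0 : (0:ℝ) ≤ ((i:ℝ) + 1) ^ (-1 + p) :=
          Real.rpow_nonneg (by positivity) _
        have h1 : ((m:ℝ) - ((i:ℝ) + 1)) * ((i:ℝ) + 1) ^ (-1 + p)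
            ≤ (m:ℝ) * ((i:ℝ) + 1) ^ (-1 + p) := by
          apply mul_le_mul_of_nonneg_right _ hb0
          have : (0:ℝ) ≤ (i:ℝ) + 1 := by positivity
          linarith
        have hk := key_step p hp0 hp1.le (i:ℝ) (by positivity)
        have h2 : ((i:ℝ) + 1) ^ (-1 + p) ≤ (((i:ℝ) + 1) ^ p - (i:ℝ) ^ p) / p := by
          rw [le_div_iff₀ hp0]
          have : (-1 + p) = p - 1 := by ring
          rw [this]
          linarith
        calc ((m:ℝ) - ((i:ℝ) + 1)) * ((i:ℝ) + 1) ^ (-1 + p)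
            ≤ (m:ℝ) * ((i:ℝ) + 1) ^ (-1 + p) := h1
          _ ≤ (m:ℝ) * ((((i:ℝ) + 1) ^ p - (i:ℝ) ^ p) / p) := by
              apply mul_le_mul_of_nonneg_left h2 (by positivity)
      have hsum := Finset.sum_le_sum hterm
      refine hsum.trans ?_
      rw [← Finset.mul_sum, ← Finset.sum_div]
      have htel : ∑ i ∈ Finset.range (m - 1), (((i:ℝ) + 1) ^ p - (i:ℝ) ^ p)
          = (((m - 1 : ℕ):ℝ)) ^ p - ((0:ℕ):ℝ) ^ p := by
        have := Finset.sum_range_sub (fun n : ℕ => ((n:ℝ)) ^ p) (m - 1)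
        simpa using this
      rw [htel]
      have hz : ((0:ℕ):ℝ) ^ p = 0 := by
        simp [Real.zero_rpow (ne_of_gt hp0)]
      rw [hz, sub_zero]
      have hle : ((m - 1 : ℕ):ℝ) ^ p ≤ (m:ℝ) ^ p := by
        apply Real.rpow_le_rpow (by positivity) _ hp0.le
        exact_mod_cast Nat.sub_le m 1
      gcongr
    -- now combine
    have hmp : (m:ℝ) * (m:ℝ) ^ p = (m:ℝ) ^ (1 + p) := by
      rw [Real.rpow_add hmpos, Real.rpow_one]
    have hT1 : (m:ℝ) ≤ (m:ℝ) ^ (1 + p) := by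
      nth_rewrite 1 [← Real.rpow_one (m:ℝ)]
      exact Real.rpow_le_rpow_of_exponent_le hm1 (by linarith)
    have hTpos : (0:ℝ) < (m:ℝ) ^ (1 + p) := Real.rpow_pos_of_pos hmpos _
    have hxle : x ≤ (m:ℝ) ^ (1 + p) + (m:ℝ) ^ (1 + p) / p := by
      rw [hx]
      have : (m:ℝ) * ((m:ℝ) ^ p / p) = (m:ℝ) ^ (1 + p) / p := by
        rw [mul_div_assoc'] at *
        rw [← hmp, mul_div_assoc]
      nlinarith [hSle]
    refine hxle.trans ?_
    rw [le_div_iff₀ (by positivity)]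
    set T := (m:ℝ) ^ (1 + p) with hT
    have hexp2 : (T + T / p) * (p * (p + 1)) = T * p * (p+1) + T * (p+1) := by
      field_simp
    rw [hexp2]
    nlinarith [hTpos, mul_nonneg (mul_nonneg hTpos.le (by linarith : (0:ℝ) ≤ 1 - p))
      (by linarith : (0:ℝ) ≤ 3 + p)]
  calc (m:ℝ) * Real.log (1 / D) + x * Real.log (1 / A)
      ≤ (m:ℝ) * Real.log (1 / D)
        + (4 * (m:ℝ) ^ (1 + p) / (p * (p + 1))) * Real.log (1 / A) := by
        have := mul_le_mul_of_nonneg_right hsuff hlogA.le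
        linarith
    _ = (m:ℝ) * Real.log (1 / D)
        + Real.log (1 / A) * (4 * (m:ℝ) ^ (1 + p) / (p * (p + 1))) := by ring
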